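/- Let A be an N×N primitive nonnegative matrix with Perron–Frobenius eigenvalue λ. Set f(i) = Σⱼ A(i,j) and M(i,j) = A(i,j)/f(i). Let (X_n)_{n≥0} be a Markov chain with transition matrix M started at a fixed state k, and let τ_k = inf{n ≥ 1 : X_n = k}. Then E_k[ λ^{−τ_k} Π_{t=0}^{τ_k−1} f(X_t) ] = 1. -/

import Mathlib

open MeasureTheory Finset Filter

def pExt {N : ℕ} (k : Fin N) (m : ℕ) (v : Fin m → Fin N) : ℕ → Fin N :=
  fun t => if h : t < m then v ⟨t, h⟩ else k

lemma pExt_lt {N : ℕ} (k : Fin N) {m t : ℕ} (v : Fin m → Fin N) (h : t < m) :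
    pExt k m v t = v ⟨t, h⟩ := dif_pos h

lemma pExt_cons_zero {N : ℕ} (k : Fin N) (m : ℕ) (x : Fin N) (v : Fin m → Fin N) :
    pExt k (m + 1) (Fin.cons x v) 0 = x := by
  simp [pExt]

lemma pExt_cons_succ {N : ℕ} (k : Fin N) (m : ℕ) (x : Fin N) (v : Fin m → Fin N) (t : ℕ) :
    pExt k (m + 1) (Fin.cons x v) (t + 1) = pExt k m v t := by
  unfold pExt
  by_cases h : t < m
  · rw [dif_pos (by omega : t + 1 < m + 1), dif_pos h]
    have : (⟨t + 1, by omega⟩ : Fin (m + 1)) = Fin.succ ⟨t, h⟩ := rfl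
    rw [this, Fin.cons_succ]
  · rw [dif_neg (by omega), dif_neg h]

lemma path_sum {N : ℕ} (k : Fin N) (R : Matrix (Fin N) (Fin N) ℝ) :
    ∀ (n : ℕ) (ψ : Fin N → ℝ) (j : Fin N),
    (∑ v : Fin (n + 1) → Fin N, ψ (pExt k (n + 1) v 0)
       * (∏ t ∈ Finset.range n, R (pExt k (n + 1) v t) (pExt k (n + 1) v (t + 1)))
       * (if pExt k (n + 1) v n = j then 1 else 0))
    = ∑ l, ψ l * (R ^ n) l j := by
  intro n
  induction n with
  | zero =>
    intro ψ j
    have step1 : (∑ v : Fin 1 → Fin N, ψ (pExt k 1 v 0)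
        * (∏ t ∈ Finset.range 0, R (pExt k 1 v t) (pExt k 1 v (t + 1)))
        * (if pExt k 1 v 0 = j then 1 else 0))
        = ∑ v : Fin 1 → Fin N, ψ (v 0) * (if v 0 = j then 1 else 0) := by
      apply Finset.sum_congr rfl
      intro v _
      rw [pExt_lt k v (by omega : 0 < 1)]
      simp
    rw [step1]
    rw [Fintype.sum_equiv (Equiv.funUnique (Fin 1) (Fin N))
      (fun v : Fin 1 → Fin N => ψ (v 0) * (if v 0 = j then 1 else 0))
      (fun y : Fin N => ψ y * (if y = j then 1 else 0))
      (fun v => by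
        have h0 : (Equiv.funUnique (Fin 1) (Fin N)) v = v 0 := by
          show v default = v 0
          congr 1
        rw [h0])]
    simp [Matrix.one_apply, mul_ite]
  | succ n ih =>
    intro ψ j
    rw [← Equiv.sum_comp (Fin.consEquiv (fun _ : Fin (n + 2) => Fin N))]
    rw [Fintype.sum_prod_type]
    have key : ∀ (x : Fin N) (v : Fin (n + 1) → Fin N),
        ψ (pExt k (n + 2) (Fin.consEquiv _ (x, v)) 0)
          * (∏ t ∈ Finset.range (n + 1),
              R (pExt k (n + 2) (Fin.consEquiv _ (x, v)) t)
                (pExt k (n + 2) (Fin.consEquiv _ (x, v)) (t + 1)))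
          * (if pExt k (n + 2) (Fin.consEquiv _ (x, v)) (n + 1) = j then 1 else 0)
        = (ψ x * R x (pExt k (n + 1) v 0))
            * (∏ t ∈ Finset.range n, R (pExt k (n + 1) v t) (pExt k (n + 1) v (t + 1)))
            * (if pExt k (n + 1) v n = j then 1 else 0) := by
      intro x v
      have hc : (Fin.consEquiv (fun _ : Fin (n + 2) => Fin N)) (x, v) = Fin.cons x v := rfl
      rw [hc]
      rw [Finset.prod_range_succ' (fun t => R (pExt k (n + 2) (Fin.cons x v) t)
        (pExt k (n + 2) (Fin.cons x v) (t + 1)))]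
      simp only [pExt_cons_zero, pExt_cons_succ]
      ring
    simp only [key]
    have : ∀ x : Fin N,
        (∑ v : Fin (n + 1) → Fin N, (ψ x * R x (pExt k (n + 1) v 0))
          * (∏ t ∈ Finset.range n, R (pExt k (n + 1) v t) (pExt k (n + 1) v (t + 1)))
          * (if pExt k (n + 1) v n = j then 1 else 0))
        = ∑ l, (ψ x * R x l) * (R ^ n) l j := fun x => ih (fun y => ψ x * R x y) j
    rw [Finset.sum_congr rfl (fun x _ => this x)]
    have rhs : ∀ l : Fin N, ψ l * (R ^ (n + 1)) l j
        = ∑ i : Fin N, ψ l * R l i * (R ^ n) i j := by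
      intro l
      rw [pow_succ' R n, Matrix.mul_apply, Finset.mul_sum]
      exact Finset.sum_congr rfl fun i _ => by ring
    simp only [rhs]
lemma pow_entry_nonneg {N : ℕ} (R : Matrix (Fin N) (Fin N) ℝ) (h : ∀ i j, 0 ≤ R i j) :
    ∀ n i j, 0 ≤ (R ^ n) i j := by
  intro n
  induction n with
  | zero => intro i j; rw [pow_zero, Matrix.one_apply]; split <;> norm_num
  | succ n ih =>
    intro i j
    rw [pow_succ, Matrix.mul_apply]
    exact Finset.sum_nonneg fun l _ => mul_nonneg (ih i l) (h l j)

lemma pow_conj {N : ℕ} (u : Fin N → ℝ) (hu : ∀ i, u i ≠ 0)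
    (B C : Matrix (Fin N) (Fin N) ℝ) (h : ∀ i j, C i j = u j * B j i / u i) :
    ∀ n i j, (C ^ n) i j = u j * (B ^ n) j i / u i := by
  intro n
  induction n with
  | zero =>
    intro i j
    rw [pow_zero, pow_zero, Matrix.one_apply, Matrix.one_apply]
    by_cases hij : i = j
    · subst hij; simp [hu i]
    · rw [if_neg hij, if_neg (Ne.symm hij)]; simp
  | succ n ih =>
    intro i j
    rw [pow_succ, Matrix.mul_apply, pow_succ' B n, Matrix.mul_apply]
    have : ∀ l, (C ^ n) i l * C l j = u j * (B j l * (B ^ n) l i) / u i := by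
      intro l
      rw [ih i l, h l j]
      field_simp [hu l]
    rw [Finset.sum_congr rfl fun l _ => this l]
    rw [← Finset.sum_div, ← Finset.mul_sum]


lemma sum_first_return {N : ℕ} (k : Fin N) (Q C : Matrix (Fin N) (Fin N) ℝ)
    (hQ0 : ∀ i j, 0 ≤ Q i j) (hQ1 : ∀ i, ∑ j, Q i j = 1)
    (hC : ∀ i j, C i j = if j = k then 0 else Q i j)
    (m : ℕ) (hm : 0 < m) (hpos : ∀ i, 0 < (Q ^ m) i k) :
    Tendsto (fun n => ∑ i ∈ Finset.range n, ((C ^ i) * Q) k k) atTop (nhds 1) := by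
  have hC0 : ∀ i j, 0 ≤ C i j := by
    intro i j; rw [hC]; split
    · exact le_refl 0
    · exact hQ0 i j
  have hCn0 : ∀ n i j, 0 ≤ (C ^ n) i j := by
    intro n
    induction n with
    | zero => intro i j; rw [pow_zero]; rw [Matrix.one_apply]; split <;> norm_num
    | succ n ih =>
      intro i j
      rw [pow_succ, Matrix.mul_apply]
      exact Finset.sum_nonneg fun l _ => mul_nonneg (ih i l) (hC0 l j)
  have hQn0 : ∀ n i j, 0 ≤ (Q ^ n) i j := by
    intro n
    induction n with
    | zero => intro i j; rw [pow_zero]; rw [Matrix.one_apply]; split <;> norm_num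
    | succ n ih =>
      intro i j
      rw [pow_succ, Matrix.mul_apply]
      exact Finset.sum_nonneg fun l _ => mul_nonneg (ih i l) (hQ0 l j)
  have hQn1 : ∀ n i, ∑ j, (Q ^ n) i j = 1 := by
    intro n
    induction n with
    | zero => intro i; simp [Matrix.one_apply]
    | succ n ih =>
      intro i
      simp only [pow_succ, Matrix.mul_apply]
      rw [Finset.sum_comm]
      have : ∀ l, ∑ j, (Q ^ n) i l * Q l j = (Q ^ n) i l := by
        intro l; rw [← Finset.mul_sum, hQ1, mul_one]
      rw [Finset.sum_congr rfl fun l _ => this l]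
      exact ih i
  have hCQ : ∀ n i j, (C ^ n) i j ≤ (Q ^ n) i j := by
    intro n
    induction n with
    | zero => intro i j; rw [pow_zero, pow_zero]
    | succ n ih =>
      intro i j
      rw [pow_succ, pow_succ, Matrix.mul_apply, Matrix.mul_apply]
      apply Finset.sum_le_sum
      intro l _
      have h1 : C l j ≤ Q l j := by
        rw [hC]; split
        · exact hQ0 l j
        · exact le_refl _
      exact mul_le_mul (ih i l) h1 (hC0 l j) (hQn0 n i l)
  have hCk : ∀ n, 0 < n → ∀ i, (C ^ n) i k = 0 := by
    intro n hn i
    obtain ⟨s, rfl⟩ := Nat.exists_eq_add_of_lt hn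
    rw [zero_add, pow_succ, Matrix.mul_apply]
    apply Finset.sum_eq_zero
    intro l _
    rw [hC, if_pos rfl, mul_zero]
  set r : ℕ → ℝ := fun n => ∑ j, (C ^ n) k j with hr
  have hr0 : r 0 = 1 := by simp [hr, Matrix.one_apply]
  have hF0 : ∀ n, 0 ≤ ((C ^ n) * Q) k k := by
    intro n
    rw [Matrix.mul_apply]
    exact Finset.sum_nonneg fun l _ => mul_nonneg (hCn0 n k l) (hQ0 l k)
  have hrrec : ∀ n, r (n + 1) = r n - ((C ^ n) * Q) k k := by
    intro n
    simp only [hr, pow_succ, Matrix.mul_apply]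
    rw [Finset.sum_comm]
    have : ∀ l, ∑ j, (C ^ n) k l * C l j = (C ^ n) k l * (1 - Q l k) := by
      intro l
      rw [← Finset.mul_sum]
      congr 1
      have : ∀ j, C l j = Q l j - (if j = k then Q l j else 0) := by
        intro j; rw [hC]; split <;> simp
      rw [Finset.sum_congr rfl fun j _ => this j, Finset.sum_sub_distrib, hQ1,
        Finset.sum_ite_eq' Finset.univ k (fun j => Q l j)]
      simp
    rw [Finset.sum_congr rfl fun l _ => this l]
    simp only [mul_sub, mul_one]
    rw [Finset.sum_sub_distrib]
  have hpartial : ∀ n, ∑ i ∈ Finset.range n, ((C ^ i) * Q) k k = 1 - r n := by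
    intro n
    induction n with
    | zero => simp [hr0]
    | succ n ih => rw [Finset.sum_range_succ, ih, hrrec n]; ring
  set ε : ℝ := Finset.univ.inf' (Finset.univ_nonempty_iff.mpr ⟨k⟩) (fun l => (Q ^ m) l k) with hε
  have hεpos : 0 < ε := by
    rw [hε, Finset.lt_inf'_iff]
    intro l _
    exact hpos l
  have hε1 : ε ≤ 1 := by
    have h1 : ε ≤ (Q ^ m) k k := Finset.inf'_le _ (Finset.mem_univ k)
    have h2 : (Q ^ m) k k ≤ ∑ j, (Q ^ m) k j :=
      Finset.single_le_sum (fun j _ => hQn0 m k j) (Finset.mem_univ k)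
    rw [hQn1 m k] at h2
    linarith
  have hεle : ∀ l, (Q ^ m) l k ≥ ε := fun l => Finset.inf'_le _ (Finset.mem_univ l)
  have hrowC : ∀ l, ∑ j, (C ^ m) l j ≤ 1 - ε := by
    intro l
    have h1 : ∑ j, (C ^ m) l j ≤ ∑ j, (if j = k then 0 else (Q ^ m) l j) := by
      apply Finset.sum_le_sum
      intro j _
      split
      · next h => rw [h, hCk m hm l]
      · exact hCQ m l j
    have h2 : ∑ j, (if j = k then 0 else (Q ^ m) l j) = 1 - (Q ^ m) l k := by
      have : ∀ j, (if j = k then (0:ℝ) else (Q ^ m) l j)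
          = (Q ^ m) l j - (if j = k then (Q ^ m) l j else 0) := by
        intro j; split <;> simp
      rw [Finset.sum_congr rfl fun j _ => this j, Finset.sum_sub_distrib, hQn1,
        Finset.sum_ite_eq' Finset.univ k (fun j => (Q ^ m) l j)]
      simp
    have h3 := hεle l
    linarith [h1, h2.le, h2.ge]
  have hcontr : ∀ n, r (n + m) ≤ (1 - ε) * r n := by
    intro n
    simp only [hr, pow_add, Matrix.mul_apply]
    rw [Finset.sum_comm]
    have step : ∀ l, ∑ j, (C ^ n) k l * (C ^ m) l j ≤ (C ^ n) k l * (1 - ε) := by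
      intro l
      rw [← Finset.mul_sum]
      exact mul_le_mul_of_nonneg_left (hrowC l) (hCn0 n k l)
    calc ∑ l, ∑ j, (C ^ n) k l * (C ^ m) l j
        ≤ ∑ l, (C ^ n) k l * (1 - ε) := Finset.sum_le_sum fun l _ => step l
      _ = (1 - ε) * r n := by rw [hr]; rw [← Finset.sum_mul]; ring
  have hrnonneg : ∀ n, 0 ≤ r n := fun n => Finset.sum_nonneg fun j _ => hCn0 n k j
  have hranti : Antitone r := by
    apply antitone_nat_of_succ_le
    intro n
    rw [hrrec n]
    linarith [hF0 n]
  have hgeo : ∀ j, r (m * j) ≤ (1 - ε) ^ j := by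
    intro j
    induction j with
    | zero => simp [hr0]
    | succ j ih =>
      have : m * (j + 1) = m * j + m := by ring
      rw [this, pow_succ]
      calc r (m * j + m) ≤ (1 - ε) * r (m * j) := hcontr (m * j)
        _ ≤ (1 - ε) * (1 - ε) ^ j :=
            mul_le_mul_of_nonneg_left ih (by linarith)
        _ = (1 - ε) ^ j * (1 - ε) := by ring
  have hbound : ∀ n, r n ≤ (1 - ε) ^ (n / m) := by
    intro n
    calc r n ≤ r (m * (n / m)) := hranti (Nat.mul_div_le n m)
      _ ≤ (1 - ε) ^ (n / m) := hgeo (n / m)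
  have hdiv : Tendsto (fun n : ℕ => n / m) atTop atTop := by
    apply Filter.tendsto_atTop_atTop.mpr
    intro b
    exact ⟨b * m, fun n hn => (Nat.le_div_iff_mul_le hm).mpr hn⟩
  have hrtend : Tendsto r atTop (nhds 0) := by
    apply squeeze_zero hrnonneg hbound
    exact (tendsto_pow_atTop_nhds_zero_of_lt_one (by linarith) (by linarith)).comp hdiv
  have := Tendsto.const_sub (1 : ℝ) hrtend
  rw [sub_zero] at this
  apply this.congr
  intro n
  rw [hpartial n]

/-- With the notation of the theorem, the expectation
`E_k[ lam^{-τ} ∏_{t<τ} f (X t) ]` equals `1`. -/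
theorem expectation_return_time_weight_eq_one
    {N : ℕ} (A : Matrix (Fin N) (Fin N) ℝ)
    (hA_nonneg : ∀ i j, 0 ≤ A i j)
    (hA_prim : ∃ m : ℕ, 0 < m ∧ ∀ i j, 0 < (A ^ m) i j)
    (lam : ℝ) (u : Fin N → ℝ)
    (hlam_pos : 0 < lam)
    (hu_pos : ∀ i, 0 < u i)
    (hu_sum : ∑ i, u i = 1)
    (hu_eig : ∀ j, ∑ i, u i * A i j = lam * u j)
    (f : Fin N → ℝ) (hf : ∀ i, f i = ∑ j, A i j)
    (M : Matrix (Fin N) (Fin N) ℝ) (hM : ∀ i j, M i j = A i j / f i)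
    (Ω : Type*) [MeasurableSpace Ω] (P : Measure Ω) [IsProbabilityMeasure P]
    (X : ℕ → Ω → Fin N) (hX_meas : ∀ n, Measurable (X n))
    (k : Fin N)
    (h_chain : ∀ (n : ℕ) (path : ℕ → Fin N),
      (P {ω | ∀ t ≤ n, X t ω = path t}).toReal =
        (if path 0 = k then 1 else 0) *
          ∏ t ∈ Finset.range n, M (path t) (path (t + 1)))
    (τ : Ω → ℕ) (hτ : ∀ ω, τ ω = sInf {n : ℕ | 1 ≤ n ∧ X n ω = k})
    (hτ_fin : ∀ᵐ ω ∂P, ∃ n : ℕ, 1 ≤ n ∧ X n ω = k) :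
    ∫ ω, lam⁻¹ ^ (τ ω) * ∏ t ∈ Finset.range (τ ω), f (X t ω) ∂P = 1 := by
  classical
  obtain ⟨m, hm, hAm⟩ := hA_prim
  have hlam_ne : lam ≠ 0 := ne_of_gt hlam_pos
  have hu_ne : ∀ i, u i ≠ 0 := fun i => ne_of_gt (hu_pos i)
  have hf_nonneg : ∀ i, 0 ≤ f i := fun i => by
    rw [hf]; exact Finset.sum_nonneg fun j _ => hA_nonneg i j
  have hf_pos : ∀ i, 0 < f i := by
    intro i
    rcases lt_or_eq_of_le (hf_nonneg i) with h | h
    · exact h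
    · exfalso
      have hfi : f i = 0 := h.symm
      rw [hf] at hfi
      have hAi : ∀ j, A i j = 0 := fun j =>
        (Finset.sum_eq_zero_iff_of_nonneg (fun j _ => hA_nonneg i j)).mp hfi j (Finset.mem_univ j)
      have hz : (A ^ m) i k = 0 := by
        obtain ⟨s, rfl⟩ := Nat.exists_eq_add_of_lt hm
        rw [zero_add, pow_succ' A s, Matrix.mul_apply]
        exact Finset.sum_eq_zero fun l _ => by rw [hAi l, zero_mul]
      exact absurd hz (ne_of_gt (hAm i k))
  have hM_nonneg : ∀ i j, 0 ≤ M i j := fun i j => by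
    rw [hM]; exact div_nonneg (hA_nonneg i j) (hf_nonneg i)
  -- matrices
  set At : Matrix (Fin N) (Fin N) ℝ := lam⁻¹ • A with hAtd
  have hAt_apply : ∀ i j, At i j = lam⁻¹ * A i j := fun i j => rfl
  have hAt_nonneg : ∀ i j, 0 ≤ At i j := fun i j =>
    mul_nonneg (inv_nonneg.mpr hlam_pos.le) (hA_nonneg i j)
  have hAtpow : ∀ n i j, (At ^ n) i j = lam⁻¹ ^ n * (A ^ n) i j := by
    intro n i j
    rw [hAtd, smul_pow]
    rfl
  set B : Matrix (Fin N) (Fin N) ℝ := Matrix.of (fun i j => if i = k then 0 else At i j)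
    with hBd
  have hB_apply : ∀ i j, B i j = if i = k then 0 else At i j := fun i j => rfl
  have hB_nonneg : ∀ i j, 0 ≤ B i j := fun i j => by
    rw [hB_apply]; split
    · exact le_refl 0
    · exact hAt_nonneg i j
  set Q : Matrix (Fin N) (Fin N) ℝ := Matrix.of (fun i j => u j * At j i / u i) with hQd
  have hQ_apply : ∀ i j, Q i j = u j * At j i / u i := fun i j => rfl
  set C : Matrix (Fin N) (Fin N) ℝ := Matrix.of (fun i j => if j = k then 0 else Q i j)
    with hCd
  have hC_apply : ∀ i j, C i j = if j = k then 0 else Q i j := fun i j => rfl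
  have hQ0 : ∀ i j, 0 ≤ Q i j := fun i j => by
    rw [hQ_apply]
    exact div_nonneg (mul_nonneg (hu_pos j).le (hAt_nonneg j i)) (hu_pos i).le
  have hQ1 : ∀ i, ∑ j, Q i j = 1 := by
    intro i
    have h1 : ∀ j, Q i j = (u j * A j i) * (lam⁻¹ / u i) := by
      intro j
      rw [hQ_apply, hAt_apply]
      ring
    rw [Finset.sum_congr rfl fun j _ => h1 j, ← Finset.sum_mul, hu_eig i]
    field_simp
    exact div_self (hu_ne i)
  have hQpow : ∀ n i j, (Q ^ n) i j = u j * (At ^ n) j i / u i :=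
    pow_conj u hu_ne At Q hQ_apply
  have hQm_pos : ∀ i, 0 < (Q ^ m) i k := by
    intro i
    rw [hQpow m i k, hAtpow m k i]
    exact div_pos (mul_pos (hu_pos k)
      (mul_pos (pow_pos (inv_pos.mpr hlam_pos) m) (hAm k i))) (hu_pos i)
  have hCB : ∀ i j, C i j = u j * B j i / u i := by
    intro i j
    rw [hC_apply, hB_apply]
    by_cases hj : j = k
    · rw [if_pos hj, if_pos hj]; simp
    · rw [if_neg hj, if_neg hj, hQ_apply]
  have hCpow : ∀ n i j, (C ^ n) i j = u j * (B ^ n) j i / u i := pow_conj u hu_ne B C hCB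
  have hFeq : ∀ n, ((C ^ n) * Q) k k = (At * (B ^ n)) k k := by
    intro n
    rw [Matrix.mul_apply, Matrix.mul_apply]
    apply Finset.sum_congr rfl
    intro l _
    rw [hCpow n k l, hQ_apply l k]
    field_simp [hu_ne l, hu_ne k]
  have hF_nonneg : ∀ n, 0 ≤ (At * (B ^ n)) k k := by
    intro n
    rw [Matrix.mul_apply]
    exact Finset.sum_nonneg fun l _ =>
      mul_nonneg (hAt_nonneg k l) (pow_entry_nonneg B hB_nonneg n l k)
  have htendsto := sum_first_return k Q C hQ0 hQ1 hC_apply m hm hQm_pos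
  -- measure-theoretic part
  set g : Ω → ℝ := fun ω => lam⁻¹ ^ (τ ω) * ∏ t ∈ Finset.range (τ ω), f (X t ω) with hgd
  have hg_nonneg : ∀ ω, 0 ≤ g ω := fun ω =>
    mul_nonneg (pow_nonneg (inv_nonneg.mpr hlam_pos.le) _)
      (Finset.prod_nonneg fun t _ => (hf_pos _).le)
  set Ev : ∀ n : ℕ, (Fin (n + 2) → Fin N) → Set Ω :=
    fun n v => {ω | ∀ t ≤ n + 1, X t ω = pExt k (n + 2) v t} with hEvd
  set good : ∀ n : ℕ, Finset (Fin (n + 2) → Fin N) := fun n =>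
    Finset.univ.filter (fun v => pExt k (n + 2) v (n + 1) = k ∧
      ∀ t ∈ Finset.Icc 1 n, pExt k (n + 2) v t ≠ k) with hgoodd
  set U : ℕ → Set Ω := fun n => {ω | τ ω = n + 1} with hUd
  have hEv_meas : ∀ n v, MeasurableSet (Ev n v) := by
    intro n v
    have he : Ev n v = ⋂ (t : ℕ) (_ : t ≤ n + 1), X t ⁻¹' {pExt k (n + 2) v t} := by
      ext ω
      simp [hEvd, Set.mem_iInter]
    rw [he]
    exact MeasurableSet.iInter fun t =>
      MeasurableSet.iInter fun _ => hX_meas t (measurableSet_singleton _)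
  have hU_eq : ∀ n, U n = ⋃ v ∈ good n, Ev n v := by
    intro n
    ext ω
    simp only [hUd, hEvd, hgoodd, Set.mem_setOf_eq, Set.mem_iUnion, Finset.mem_filter,
      Finset.mem_univ, true_and, Set.mem_setOf_eq, exists_prop]
    constructor
    · intro hτω
      have hSne : {j : ℕ | 1 ≤ j ∧ X j ω = k}.Nonempty := by
        by_contra hS
        rw [Set.not_nonempty_iff_eq_empty] at hS
        rw [hτ ω, hS, Nat.sInf_empty] at hτω
        omega
      have hmem : 1 ≤ n + 1 ∧ X (n + 1) ω = k := by
        have h1 := Nat.sInf_mem hSne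
        rw [← hτ ω, hτω] at h1
        exact h1
      have hmid : ∀ t, 1 ≤ t → t ≤ n → X t ω ≠ k := by
        intro t h1 h2 hk
        have h3 : t ∈ {j : ℕ | 1 ≤ j ∧ X j ω = k} := ⟨h1, hk⟩
        have h4 := Nat.sInf_le h3
        rw [← hτ ω, hτω] at h4
        omega
      refine ⟨fun s => X (s : ℕ) ω, ⟨?_, ?_⟩, ?_⟩
      · rw [pExt_lt k _ (by omega : n + 1 < n + 2)]
        exact hmem.2
      · intro t ht
        rw [Finset.mem_Icc] at ht
        rw [pExt_lt k _ (by omega : t < n + 2)]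
        exact hmid t ht.1 ht.2
      · intro t ht
        rw [pExt_lt k _ (by omega : t < n + 2)]
    · rintro ⟨v, ⟨hv1, hv2⟩, hvE⟩
      have hXn1 : X (n + 1) ω = k := by
        rw [hvE (n + 1) (le_refl _)]
        exact hv1
      have hmemS : (n + 1) ∈ {j : ℕ | 1 ≤ j ∧ X j ω = k} := ⟨by omega, hXn1⟩
      have hSne : {j : ℕ | 1 ≤ j ∧ X j ω = k}.Nonempty := ⟨n + 1, hmemS⟩
      have hle : τ ω ≤ n + 1 := by
        rw [hτ ω]
        exact Nat.sInf_le hmemS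
      have hsmem := Nat.sInf_mem hSne
      rw [← hτ ω] at hsmem
      by_contra hne
      have hlt : τ ω ≤ n := by omega
      have h1 : X (τ ω) ω = pExt k (n + 2) v (τ ω) := hvE (τ ω) (by omega)
      have h2 := hv2 (τ ω) (Finset.mem_Icc.mpr ⟨hsmem.1, hlt⟩)
      rw [← h1] at h2
      exact h2 hsmem.2
  have hU_meas : ∀ n, MeasurableSet (U n) := by
    intro n
    rw [hU_eq n]
    exact (good n).measurableSet_biUnion fun v _ => hEv_meas n v
  have hUdisj : Pairwise (Function.onFun Disjoint U) := by
    intro a b hab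
    simp only [Function.onFun, hUd]
    apply Set.disjoint_left.mpr
    intro ω ha hb
    simp only [Set.mem_setOf_eq] at ha hb
    exact hab (by omega)
  have hgood_disj : ∀ n, Set.PairwiseDisjoint (↑(good n)) (Ev n) := by
    intro n v _ w _ hvw
    apply Set.disjoint_left.mpr
    intro ω hωv hωw
    apply hvw
    funext s
    have hs : (s : ℕ) ≤ n + 1 := Nat.lt_succ_iff.mp s.isLt
    have h1 := hωv (s : ℕ) hs
    have h2 := hωw (s : ℕ) hs
    rw [pExt_lt k v s.isLt] at h1
    rw [pExt_lt k w s.isLt] at h2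
    simpa using h1.symm.trans h2
  have hτ_meas : Measurable τ := by
    apply measurable_to_countable'
    intro y
    cases y with
    | zero =>
      have h0 : τ ⁻¹' {0} = ⋂ t : ℕ, {ω | ¬(1 ≤ t ∧ X t ω = k)} := by
        ext ω
        simp only [Set.mem_preimage, Set.mem_singleton_iff, Set.mem_iInter, Set.mem_setOf_eq]
        rw [hτ ω, Nat.sInf_eq_zero]
        constructor
        · rintro (h | h)
          · simp only [Set.mem_setOf_eq] at h; omega
          · intro t ht
            rw [Set.eq_empty_iff_forall_notMem] at h
            exact h t ht
        · intro h
          right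
          rw [Set.eq_empty_iff_forall_notMem]
          exact h
      rw [h0]
      apply MeasurableSet.iInter
      intro t
      by_cases h1 : 1 ≤ t
      · have he : {ω | ¬(1 ≤ t ∧ X t ω = k)} = (X t ⁻¹' {k})ᶜ := by
          ext ω; simp [h1]
        rw [he]
        exact (hX_meas t (measurableSet_singleton k)).compl
      · have he : {ω | ¬(1 ≤ t ∧ X t ω = k)} = Set.univ := by
          ext ω; simp [h1]
        rw [he]
        exact MeasurableSet.univ
    | succ n =>
      have h0 : τ ⁻¹' {n + 1} = U n := by
        ext ω; simp [hUd]
      rw [h0]; exact hU_meas n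
  have hGn : ∀ n : ℕ, Measurable fun ω => lam⁻¹ ^ n * ∏ t ∈ Finset.range n, f (X t ω) := by
    intro n
    apply Measurable.const_mul
    apply Finset.measurable_prod
    intro t _
    exact (measurable_of_countable f).comp (hX_meas t)
  have hg_meas : Measurable g := by
    intro s hs
    have h0 : g ⁻¹' s = ⋃ n : ℕ, (τ ⁻¹' {n}) ∩
        ((fun ω => lam⁻¹ ^ n * ∏ t ∈ Finset.range n, f (X t ω)) ⁻¹' s) := by
      ext ω
      simp only [Set.mem_preimage, Set.mem_iUnion, Set.mem_inter_iff, Set.mem_singleton_iff]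
      constructor
      · intro h
        exact ⟨τ ω, rfl, h⟩
      · rintro ⟨n, hn, h⟩
        have he : g ω = lam⁻¹ ^ n * ∏ t ∈ Finset.range n, f (X t ω) := by
          rw [hgd]
          simp only
          rw [hn]
        rw [he]
        exact h
    rw [h0]
    exact MeasurableSet.iUnion fun n => (hτ_meas (measurableSet_singleton n)).inter (hGn n hs)
  have hae : ∀ᵐ ω ∂P, ω ∈ ⋃ n, U n := by
    filter_upwards [hτ_fin] with ω hω
    obtain ⟨n, hn1, hnk⟩ := hω
    have hSne : {j : ℕ | 1 ≤ j ∧ X j ω = k}.Nonempty := ⟨n, hn1, hnk⟩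
    have hmem := Nat.sInf_mem hSne
    rw [← hτ ω] at hmem
    have h1 : 1 ≤ τ ω := hmem.1
    refine Set.mem_iUnion.mpr ⟨τ ω - 1, ?_⟩
    simp only [hUd, Set.mem_setOf_eq]
    omega
  -- the combinatorial identity
  have hcomb : ∀ n, (∑ v ∈ good n,
      (if pExt k (n + 2) v 0 = k then (1:ℝ) else 0) *
        ∏ t ∈ Finset.range (n + 1), At (pExt k (n + 2) v t) (pExt k (n + 2) v (t + 1)))
      = (At * (B ^ n)) k k := by
    intro n
    simp only [hgoodd]
    rw [Finset.sum_filter]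
    have hpt : ∀ v : Fin (n + 2) → Fin N,
        (if (pExt k (n + 2) v (n + 1) = k ∧ ∀ t ∈ Finset.Icc 1 n, pExt k (n + 2) v t ≠ k)
          then (if pExt k (n + 2) v 0 = k then (1:ℝ) else 0) *
            ∏ t ∈ Finset.range (n + 1), At (pExt k (n + 2) v t) (pExt k (n + 2) v (t + 1))
          else 0)
        = (if pExt k (n + 2) v 0 = k then (1:ℝ) else 0) *
            (At (pExt k (n + 2) v 0) (pExt k (n + 2) v (0 + 1)) *
              ∏ t ∈ Finset.range n,
                B (pExt k (n + 2) v (t + 1)) (pExt k (n + 2) v (t + 1 + 1))) *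
            (if pExt k (n + 2) v (n + 1) = k then (1:ℝ) else 0) := by
      intro v
      by_cases hc : pExt k (n + 2) v (n + 1) = k ∧ ∀ t ∈ Finset.Icc 1 n, pExt k (n + 2) v t ≠ k
      · rw [if_pos hc, if_pos hc.1, mul_one]
        congr 1
        rw [Finset.prod_range_succ'
          (fun t => At (pExt k (n + 2) v t) (pExt k (n + 2) v (t + 1))) n]
        rw [mul_comm]
        congr 1
        apply Finset.prod_congr rfl
        intro t ht
        rw [Finset.mem_range] at ht
        rw [hB_apply, if_neg (hc.2 (t + 1) (Finset.mem_Icc.mpr ⟨by omega, by omega⟩))]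
      · rw [if_neg hc]
        push_neg at hc
        by_cases h1 : pExt k (n + 2) v (n + 1) = k
        · obtain ⟨t, ht, htk⟩ := hc h1
          rw [Finset.mem_Icc] at ht
          obtain ⟨s, rfl⟩ : ∃ s, t = s + 1 := ⟨t - 1, by omega⟩
          have hz : (∏ t ∈ Finset.range n,
              B (pExt k (n + 2) v (t + 1)) (pExt k (n + 2) v (t + 1 + 1))) = 0 := by
            apply Finset.prod_eq_zero (Finset.mem_range.mpr (show s < n by omega))
            rw [hB_apply, if_pos htk]
          rw [hz]
          ring
        · rw [if_neg h1]
          ring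
    refine Eq.trans (Fintype.sum_congr _ _ fun v => Eq.trans (by congr) (hpt v)) ?_
    rw [← Equiv.sum_comp (Fin.consEquiv (fun _ : Fin (n + 2) => Fin N))]
    rw [Fintype.sum_prod_type]
    have key : ∀ (x : Fin N) (w : Fin (n + 1) → Fin N),
        ((if pExt k (n + 2) ((Fin.consEquiv fun _ : Fin (n + 2) => Fin N) (x, w)) 0 = k
            then (1:ℝ) else 0) *
          (At (pExt k (n + 2) ((Fin.consEquiv fun _ : Fin (n + 2) => Fin N) (x, w)) 0)
              (pExt k (n + 2) ((Fin.consEquiv fun _ : Fin (n + 2) => Fin N) (x, w)) (0 + 1)) *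
            ∏ t ∈ Finset.range n,
              B (pExt k (n + 2) ((Fin.consEquiv fun _ : Fin (n + 2) => Fin N) (x, w)) (t + 1))
                (pExt k (n + 2) ((Fin.consEquiv fun _ : Fin (n + 2) => Fin N) (x, w)) (t + 1 + 1))) *
          (if pExt k (n + 2) ((Fin.consEquiv fun _ : Fin (n + 2) => Fin N) (x, w)) (n + 1) = k
            then (1:ℝ) else 0))
        = (if x = k then (1:ℝ) else 0) *
            (At x (pExt k (n + 1) w 0) *
              ∏ t ∈ Finset.range n, B (pExt k (n + 1) w t) (pExt k (n + 1) w (t + 1))) *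
            (if pExt k (n + 1) w n = k then (1:ℝ) else 0) := by
      intro x w
      have hcc : (Fin.consEquiv fun _ : Fin (n + 2) => Fin N) (x, w) = Fin.cons x w := rfl
      rw [hcc]
      have e0 : pExt k (n + 2) (Fin.cons x w) 0 = x := pExt_cons_zero k (n + 1) x w
      have e2 : ∀ t, pExt k (n + 2) (Fin.cons x w) (t + 1) = pExt k (n + 1) w t :=
        pExt_cons_succ k (n + 1) x w
      rw [e0, e2 0, e2 n]
      have hprod : (∏ t ∈ Finset.range n,
          B (pExt k (n + 2) (Fin.cons x w) (t + 1)) (pExt k (n + 2) (Fin.cons x w) (t + 1 + 1)))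
          = ∏ t ∈ Finset.range n, B (pExt k (n + 1) w t) (pExt k (n + 1) w (t + 1)) := by
        apply Finset.prod_congr rfl
        intro t _
        rw [e2 t, e2 (t + 1)]
      rw [hprod]
    simp only [key]
    have hx : ∀ x : Fin N, (∑ w : Fin (n + 1) → Fin N,
        (if x = k then (1:ℝ) else 0) *
          (At x (pExt k (n + 1) w 0) *
            ∏ t ∈ Finset.range n, B (pExt k (n + 1) w t) (pExt k (n + 1) w (t + 1))) *
          (if pExt k (n + 1) w n = k then (1:ℝ) else 0))
        = if x = k then (∑ w : Fin (n + 1) → Fin N,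
            At x (pExt k (n + 1) w 0) *
              (∏ t ∈ Finset.range n, B (pExt k (n + 1) w t) (pExt k (n + 1) w (t + 1))) *
              (if pExt k (n + 1) w n = k then (1:ℝ) else 0)) else 0 := by
      intro x
      by_cases hx0 : x = k
      · rw [if_pos hx0, if_pos hx0]
        apply Finset.sum_congr rfl
        intro w _
        rw [one_mul]
      · rw [if_neg hx0, if_neg hx0]
        apply Finset.sum_eq_zero
        intro w _
        rw [zero_mul, zero_mul]
    rw [Finset.sum_congr rfl fun x _ => hx x]
    rw [Finset.sum_ite_eq' Finset.univ k]
    rw [if_pos (Finset.mem_univ k)]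
    have hps := path_sum k B n (At k) k
    rw [show (∑ w : Fin (n + 1) → Fin N,
        At k (pExt k (n + 1) w 0) *
          (∏ t ∈ Finset.range n, B (pExt k (n + 1) w t) (pExt k (n + 1) w (t + 1))) *
          (if pExt k (n + 1) w n = k then (1:ℝ) else 0))
      = ∑ l, At k l * (B ^ n) l k from hps]
    rw [Matrix.mul_apply]
  -- value of the lintegral on each Ev
  have hterm : ∀ n, ∀ v ∈ good n, (∫⁻ ω in Ev n v, ENNReal.ofReal (g ω) ∂P)
      = ENNReal.ofReal ((if pExt k (n + 2) v 0 = k then (1:ℝ) else 0) *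
          ∏ t ∈ Finset.range (n + 1), At (pExt k (n + 2) v t) (pExt k (n + 2) v (t + 1))) := by
    intro n v hv
    have hτv : ∀ ω ∈ Ev n v, τ ω = n + 1 := by
      intro ω hω
      have hU : ω ∈ U n := by
        rw [hU_eq n]
        exact Set.mem_biUnion hv hω
      simpa [hUd] using hU
    have hconst : ∀ ω ∈ Ev n v, g ω
        = lam⁻¹ ^ (n + 1) * ∏ t ∈ Finset.range (n + 1), f (pExt k (n + 2) v t) := by
      intro ω hω
      have h1 := hτv ω hω
      have h2 : g ω = lam⁻¹ ^ (n + 1) * ∏ t ∈ Finset.range (n + 1), f (X t ω) := by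
        rw [hgd]
        simp only
        rw [h1]
      rw [h2]
      congr 1
      apply Finset.prod_congr rfl
      intro t ht
      rw [Finset.mem_range] at ht
      rw [hω t (by omega)]
    rw [setLIntegral_congr_fun (hEv_meas n v)
      (fun ω hω => congrArg ENNReal.ofReal (hconst ω hω))]
    rw [setLIntegral_const]
    have hP : P (Ev n v) = ENNReal.ofReal ((if pExt k (n + 2) v 0 = k then (1:ℝ) else 0) *
        ∏ t ∈ Finset.range (n + 1),
          M (pExt k (n + 2) v t) (pExt k (n + 2) v (t + 1))) := by
      have hc := h_chain (n + 1) (pExt k (n + 2) v)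
      have hset : {ω | ∀ t ≤ n + 1, X t ω = pExt k (n + 2) v t} = Ev n v := rfl
      rw [hset] at hc
      rw [← hc, ENNReal.ofReal_toReal (measure_ne_top P _)]
    rw [hP, ← ENNReal.ofReal_mul (mul_nonneg (pow_nonneg (inv_nonneg.mpr hlam_pos.le) _)
      (Finset.prod_nonneg fun t _ => (hf_pos _).le))]
    congr 1
    by_cases h0 : pExt k (n + 2) v 0 = k
    · rw [if_pos h0]
      have hA : ∀ t ∈ Finset.range (n + 1),
          At (pExt k (n + 2) v t) (pExt k (n + 2) v (t + 1))
          = lam⁻¹ * (f (pExt k (n + 2) v t) *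
              M (pExt k (n + 2) v t) (pExt k (n + 2) v (t + 1))) := by
        intro t _
        rw [hAt_apply, hM, ← mul_div_assoc, mul_div_cancel_left₀ _ (ne_of_gt (hf_pos _))]
      rw [Finset.prod_congr rfl hA, Finset.prod_mul_distrib, Finset.prod_const,
        Finset.card_range, Finset.prod_mul_distrib]
      ring
    · rw [if_neg h0]
      ring
  have hUn_int : ∀ n, (∫⁻ ω in U n, ENNReal.ofReal (g ω) ∂P)
      = ENNReal.ofReal ((At * (B ^ n)) k k) := by
    intro n
    rw [hU_eq n, lintegral_biUnion_finset (hgood_disj n) (fun v _ => hEv_meas n v)]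
    rw [Finset.sum_congr rfl (hterm n)]
    rw [← ENNReal.ofReal_sum_of_nonneg (fun v _ => ?termnn)]
    · rw [hcomb n]
    case termnn =>
      apply mul_nonneg
      · split <;> norm_num
      · exact Finset.prod_nonneg fun t _ => hAt_nonneg _ _
  have hlint : (∫⁻ ω, ENNReal.ofReal (g ω) ∂P) = 1 := by
    have h1 : (∫⁻ ω, ENNReal.ofReal (g ω) ∂P)
        = ∑' n, ∫⁻ ω in U n, ENNReal.ofReal (g ω) ∂P := by
      rw [← setLIntegral_univ (fun ω => ENNReal.ofReal (g ω))]
      rw [setLIntegral_congr ((Filter.eventuallyEq_univ.mpr hae).symm)]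
      exact lintegral_iUnion hU_meas hUdisj _
    rw [h1, tsum_congr hUn_int]
    have h2 : ∀ n : ℕ, ENNReal.ofReal ((At * (B ^ n)) k k)
        = ENNReal.ofReal (((C ^ n) * Q) k k) := fun n => by rw [hFeq n]
    rw [tsum_congr h2]
    have ht1 := ENNReal.tendsto_nat_tsum (fun n => ENNReal.ofReal (((C ^ n) * Q) k k))
    have ht2 : Filter.Tendsto
        (fun n => ∑ i ∈ Finset.range n, ENNReal.ofReal (((C ^ i) * Q) k k))
        Filter.atTop (nhds 1) := by
      have h3 : ∀ n, (∑ i ∈ Finset.range n, ENNReal.ofReal (((C ^ i) * Q) k k))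
          = ENNReal.ofReal (∑ i ∈ Finset.range n, ((C ^ i) * Q) k k) := fun n =>
        (ENNReal.ofReal_sum_of_nonneg fun i _ => (hFeq i) ▸ hF_nonneg i).symm
      have h4 := ENNReal.tendsto_ofReal htendsto
      rw [ENNReal.ofReal_one] at h4
      exact h4.congr fun n => (h3 n).symm
    exact (tendsto_nhds_unique ht1 ht2)
  rw [integral_eq_lintegral_of_nonneg_ae (Filter.Eventually.of_forall hg_nonneg)
    hg_meas.aestronglyMeasurable]
  rw [hlint]
  exact ENNReal.toReal_one
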